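/- arXiv:1612.03360 — 3 statements merged into one kernel-verified Lean document; each statement's English description precedes it below -/
import Mathlib

section
/- For a Poisson channel Y ~ Poisson(X + λ₀) with nonnegative input X and λ₀ > 0, the mutual information satisfies I(X;Y) ≤ Cov(X + λ₀, log(X + λ₀)). -/
noncomputable def pois (r : ℝ) (n : ℕ) : ℝ :=
  Real.exp (-r) * r ^ n / n.factorial

lemma pois_eq (r : ℝ) (n : ℕ) : pois r n = Real.exp (-r) * (r ^ n / n.factorial) := by
  unfold pois; ring

lemma pois_pos {r : ℝ} (hr : 0 < r) (n : ℕ) : 0 < pois r n := by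
  unfold pois; positivity

lemma summable_pois (r : ℝ) : Summable (pois r) := by
  have := (Real.summable_pow_div_factorial r).mul_left (Real.exp (-r))
  exact this.congr fun n => (pois_eq r n).symm

lemma tsum_pow_div_factorial (r : ℝ) : ∑' n : ℕ, r ^ n / n.factorial = Real.exp r := by
  rw [Real.exp_eq_exp_ℝ, NormedSpace.exp_eq_tsum_div]

lemma tsum_pois (r : ℝ) : ∑' n, pois r n = 1 := by
  have : ∑' n, pois r n = Real.exp (-r) * ∑' n : ℕ, r ^ n / n.factorial := by
    rw [← tsum_mul_left]; exact tsum_congr fun n => pois_eq r n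
  rw [this, tsum_pow_div_factorial, ← Real.exp_add]
  simp

lemma summable_nat_mul_pois (r : ℝ) : Summable (fun n : ℕ => (n : ℝ) * pois r n) := by
  rw [← summable_nat_add_iff 1]
  have : Summable (fun n : ℕ => (r * Real.exp (-r)) * (r ^ n / n.factorial)) :=
    (Real.summable_pow_div_factorial r).mul_left _
  refine this.congr fun n => ?_
  rw [pois_eq, Nat.factorial_succ]
  push_cast
  have hn : ((n : ℝ) + 1) ≠ 0 := by positivity
  field_simp
  ring

lemma tsum_nat_mul_pois (r : ℝ) : ∑' n : ℕ, (n : ℝ) * pois r n = r := by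
  rw [Summable.tsum_eq_zero_add (summable_nat_mul_pois r)]
  simp only [Nat.cast_zero, zero_mul, zero_add]
  have heq : ∀ n : ℕ, ((n : ℝ) + 1) * pois r (n + 1)
      = (r * Real.exp (-r)) * (r ^ n / n.factorial) := by
    intro n
    rw [pois_eq, Nat.factorial_succ]
    push_cast
    have hn : ((n : ℝ) + 1) ≠ 0 := by positivity
    field_simp
    ring
  calc ∑' n : ℕ, ((n + 1 : ℕ) : ℝ) * pois r (n + 1)
      = ∑' n : ℕ, (r * Real.exp (-r)) * (r ^ n / n.factorial) := by
        refine tsum_congr fun n => ?_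
        push_cast
        rw [heq n]
    _ = (r * Real.exp (-r)) * Real.exp r := by rw [tsum_mul_left, tsum_pow_div_factorial]
    _ = r := by rw [mul_assoc, ← Real.exp_add]; simp

lemma log_pois {r : ℝ} (hr : 0 < r) (n : ℕ) :
    Real.log (pois r n) = -r + n * Real.log r - Real.log n.factorial := by
  unfold pois
  rw [Real.log_div (by positivity) (by positivity),
    Real.log_mul (by positivity) (by positivity), Real.log_exp, Real.log_pow]

lemma summable_pois_linear (r C D : ℝ) : Summable (fun n : ℕ => pois r n * (C + D * n)) := by
  have := ((summable_pois r).mul_left C).add ((summable_nat_mul_pois r).mul_left D)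
  exact this.congr fun n => by ring

lemma tsum_pois_linear (r C D : ℝ) : ∑' n : ℕ, pois r n * (C + D * n) = C + D * r := by
  have h : ∑' n : ℕ, pois r n * (C + D * n)
      = ∑' n : ℕ, (C * pois r n + D * ((n : ℝ) * pois r n)) := tsum_congr fun n => by ring
  rw [h, Summable.tsum_add ((summable_pois r).mul_left C) ((summable_nat_mul_pois r).mul_left D),
    tsum_mul_left, tsum_mul_left, tsum_pois, tsum_nat_mul_pois]
  ring

theorem stmt8_aux {α : Type} [Fintype α] (p : α → ℝ) (lam : α → ℝ) (lam0 : ℝ)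
    (hp : ∀ a, 0 ≤ p a) (hp1 : (∑ a, p a) = 1)
    (hlam : 0 < lam0) (hl : ∀ a, lam0 ≤ lam a) :
    (∑ a, p a * ∑' n : ℕ,
        pois (lam a) n * Real.log (pois (lam a) n / (∑ b, p b * pois (lam b) n))) ≤
      (∑ a, p a * (lam a * Real.log (lam a))) -
        (∑ a, p a * lam a) * (∑ a, p a * Real.log (lam a)) := by
  classical
  have hlpos : ∀ a, 0 < lam a := fun a => lt_of_lt_of_le hlam (hl a)
  set M : ℕ → ℝ := fun n => ∑ b, p b * pois (lam b) n with hMdef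
  have hMn : ∀ n, M n = ∑ b, p b * pois (lam b) n := fun n => rfl
  set lb : ℝ := ∑ a, p a * lam a with hlbdef
  have hlb_ge : lam0 ≤ lb := by
    rw [hlbdef]
    calc lam0 = ∑ a, p a * lam0 := by rw [← Finset.sum_mul, hp1, one_mul]
      _ ≤ ∑ a, p a * lam a :=
          Finset.sum_le_sum fun a _ => mul_le_mul_of_nonneg_left (hl a) (hp a)
  have hlbpos : 0 < lb := lt_of_lt_of_le hlam hlb_ge
  obtain ⟨b0, hb0⟩ : ∃ b, 0 < p b := by
    by_contra hcon
    push_neg at hcon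
    have hz : ∀ b, p b = 0 := fun b => le_antisymm (hcon b) (hp b)
    simp [hz] at hp1
  have hMpos : ∀ n, 0 < M n := fun n =>
    Finset.sum_pos' (fun b _ => mul_nonneg (hp b) (pois_pos (hlpos b) n).le)
      ⟨b0, Finset.mem_univ b0, mul_pos hb0 (pois_pos (hlpos b0) n)⟩
  have hMsummable : Summable M :=
    summable_sum fun b (_ : b ∈ Finset.univ) => (summable_pois (lam b)).mul_left (p b)
  have htsumM : ∑' n, M n = 1 := by
    calc ∑' n, M n = ∑ b, ∑' n, p b * pois (lam b) n :=
          Summable.tsum_finsetSum fun b _ => (summable_pois (lam b)).mul_left (p b)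
      _ = ∑ b, p b * 1 := by
          refine Finset.sum_congr rfl fun b _ => ?_
          rw [tsum_mul_left, tsum_pois]
      _ = 1 := by simp [hp1]
  have hne : (Finset.univ : Finset α).Nonempty := ⟨b0, Finset.mem_univ _⟩
  set L : ℝ := Finset.univ.sup' hne lam with hLdef
  have hlamL : ∀ b, lam b ≤ L := fun b => Finset.le_sup' lam (Finset.mem_univ b)
  have hLpos : 0 < L := lt_of_lt_of_le (hlpos b0) (hlamL b0)
  set K : ℝ := p b0 * Real.exp (-L) with hKdef
  have hKpos : 0 < K := mul_pos hb0 (Real.exp_pos _)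
  -- Upper and lower bounds for log (M n)
  have hlogMub : ∀ n : ℕ,
      Real.log (M n) ≤ n * Real.log L - Real.log n.factorial := by
    intro n
    have hMub : M n ≤ L ^ n / n.factorial := by
      calc M n ≤ ∑ b, p b * (L ^ n / n.factorial) := by
            refine Finset.sum_le_sum fun b _ => mul_le_mul_of_nonneg_left ?_ (hp b)
            rw [pois_eq]
            have h1 : Real.exp (-(lam b)) ≤ 1 :=
              Real.exp_le_one_iff.2 (by linarith [hlpos b])
            have h2 : lam b ^ n ≤ L ^ n := pow_le_pow_left₀ (hlpos b).le (hlamL b) n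
            have hfac : (0:ℝ) < n.factorial := by positivity
            have h3 : lam b ^ n / (n.factorial : ℝ) ≤ L ^ n / n.factorial := by gcongr
            calc Real.exp (-(lam b)) * (lam b ^ n / n.factorial)
                ≤ 1 * (L ^ n / n.factorial) := by
                  exact mul_le_mul h1 h3 (div_nonneg (pow_nonneg (hlpos b).le n) (Nat.cast_nonneg _)) zero_le_one
              _ = L ^ n / n.factorial := one_mul _
        _ = L ^ n / n.factorial := by rw [← Finset.sum_mul, hp1, one_mul]
    calc Real.log (M n) ≤ Real.log (L ^ n / n.factorial) :=
          Real.log_le_log (hMpos n) hMub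
      _ = n * Real.log L - Real.log n.factorial := by
          rw [Real.log_div (pow_ne_zero n hLpos.ne')
            (Nat.cast_ne_zero.2 n.factorial_pos.ne'), Real.log_pow]
  have hlogMlb : ∀ n : ℕ,
      Real.log K + n * Real.log lam0 - Real.log n.factorial ≤ Real.log (M n) := by
    intro n
    have hMlb : K * lam0 ^ n / n.factorial ≤ M n := by
      have h1 : K * lam0 ^ n / n.factorial ≤ p b0 * pois (lam b0) n := by
        rw [pois_eq, hKdef]
        have e1 : Real.exp (-L) ≤ Real.exp (-(lam b0)) :=
          Real.exp_le_exp.2 (by linarith [hlamL b0])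
        have e2 : lam0 ^ n ≤ (lam b0) ^ n := pow_le_pow_left₀ hlam.le (hl b0) n
        have hfac : (0:ℝ) < n.factorial := by positivity
        have := mul_le_mul e1 e2 (by positivity) (Real.exp_pos _).le
        calc p b0 * Real.exp (-L) * lam0 ^ n / n.factorial
            = p b0 * ((Real.exp (-L) * lam0 ^ n) / n.factorial) := by ring
          _ ≤ p b0 * ((Real.exp (-(lam b0)) * lam b0 ^ n) / n.factorial) := by
              apply mul_le_mul_of_nonneg_left ?_ hb0.le
              gcongr
          _ = p b0 * (Real.exp (-(lam b0)) * (lam b0 ^ n / n.factorial)) := by ring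
      exact le_trans h1
        (Finset.single_le_sum
          (fun b _ => mul_nonneg (hp b) (pois_pos (hlpos b) n).le) (Finset.mem_univ b0))
    have h2 : Real.log (K * lam0 ^ n / n.factorial) ≤ Real.log (M n) :=
      Real.log_le_log (by positivity) hMlb
    rw [Real.log_div (by positivity) (by positivity),
      Real.log_mul (by positivity) (by positivity), Real.log_pow] at h2
    linarith
  -- the correction function h n = log Q n - log M n, and its linear bound
  have hhb : ∀ n : ℕ, |Real.log (pois lb n) - Real.log (M n)|
      ≤ (lb + |Real.log K|) +
        (|Real.log lb| + |Real.log lam0| + |Real.log L|) * n := by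
    intro n
    have hq := log_pois hlbpos n
    have hub := hlogMub n
    have hlo := hlogMlb n
    have hn0 : (0:ℝ) ≤ n := Nat.cast_nonneg n
    rw [abs_le]
    constructor
    · have e1 : (n:ℝ) * (-(|Real.log lb| + |Real.log lam0| + |Real.log L|))
          ≤ n * (Real.log lb - Real.log L) := by
        apply mul_le_mul_of_nonneg_left ?_ hn0
        have := neg_abs_le (Real.log lb)
        have := le_abs_self (Real.log L)
        have := abs_nonneg (Real.log lam0)
        linarith
      have e2 : 0 ≤ |Real.log K| := abs_nonneg _
      nlinarith [e1, e2, hq, hub]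
    · have e1 : (n:ℝ) * (Real.log lb - Real.log lam0)
          ≤ n * (|Real.log lb| + |Real.log lam0| + |Real.log L|) := by
        apply mul_le_mul_of_nonneg_left ?_ hn0
        have := le_abs_self (Real.log lb)
        have := neg_abs_le (Real.log lam0)
        have := abs_nonneg (Real.log L)
        linarith
      have e2 := neg_abs_le (Real.log K)
      nlinarith [e1, e2, hq, hlo, hlbpos.le]
  have hgsum : ∀ a, Summable
      (fun n => pois (lam a) n * (Real.log (pois lb n) - Real.log (M n))) := by
    intro a
    apply Summable.of_abs
    refine Summable.of_nonneg_of_le (fun n => abs_nonneg _) (fun n => ?_)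
      (summable_pois_linear (lam a) (lb + |Real.log K|)
        (|Real.log lb| + |Real.log lam0| + |Real.log L|))
    rw [abs_mul, abs_of_nonneg (pois_pos (hlpos a) n).le]
    exact mul_le_mul_of_nonneg_left (hhb n) (pois_pos (hlpos a) n).le
  -- decomposition of each inner tsum
  have hdecomp : ∀ a, (∑' n, pois (lam a) n * Real.log (pois (lam a) n / M n))
      = ((lb - lam a) + (Real.log (lam a) - Real.log lb) * lam a)
        + ∑' n, pois (lam a) n * (Real.log (pois lb n) - Real.log (M n)) := by
    intro a
    have hpt : ∀ n, pois (lam a) n * Real.log (pois (lam a) n / M n)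
        = pois (lam a) n * ((lb - lam a) + (Real.log (lam a) - Real.log lb) * n)
          + pois (lam a) n * (Real.log (pois lb n) - Real.log (M n)) := by
      intro n
      rw [Real.log_div (pois_pos (hlpos a) n).ne' (hMpos n).ne']
      rw [log_pois (hlpos a) n, log_pois hlbpos n]
      ring
    rw [tsum_congr hpt, Summable.tsum_add (summable_pois_linear _ _ _) (hgsum a),
      tsum_pois_linear]
  -- split the LHS sum
  have hsplit : (∑ a, p a * ∑' n, pois (lam a) n * Real.log (pois (lam a) n / M n))
      = (∑ a, p a * ((lb - lam a) + (Real.log (lam a) - Real.log lb) * lam a))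
        + ∑ a, p a * ∑' n, pois (lam a) n * (Real.log (pois lb n) - Real.log (M n)) := by
    rw [← Finset.sum_add_distrib]
    exact Finset.sum_congr rfl fun a _ => by rw [hdecomp a]; ring
  -- the Gibbs correction term is nonpositive
  have hG : (∑ a, p a * ∑' n, pois (lam a) n * (Real.log (pois lb n) - Real.log (M n)))
      ≤ 0 := by
    have hre : ∀ n, (∑ a, p a * (pois (lam a) n * (Real.log (pois lb n) - Real.log (M n))))
        = M n * (Real.log (pois lb n) - Real.log (M n)) := by
      intro n
      rw [hMn n, Finset.sum_mul]
      exact Finset.sum_congr rfl fun a _ => (mul_assoc _ _ _).symm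
    have hswap : (∑ a, p a * ∑' n, pois (lam a) n * (Real.log (pois lb n) - Real.log (M n)))
        = ∑' n, M n * (Real.log (pois lb n) - Real.log (M n)) := by
      calc (∑ a, p a * ∑' n, pois (lam a) n * (Real.log (pois lb n) - Real.log (M n)))
          = ∑ a, ∑' n, p a * (pois (lam a) n * (Real.log (pois lb n) - Real.log (M n))) :=
            Finset.sum_congr rfl fun a _ => (tsum_mul_left).symm
        _ = ∑' n, ∑ a, p a * (pois (lam a) n * (Real.log (pois lb n) - Real.log (M n))) :=
            (Summable.tsum_finsetSum fun a _ => ((hgsum a).mul_left (p a))).symm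
        _ = ∑' n, M n * (Real.log (pois lb n) - Real.log (M n)) :=
            tsum_congr fun n => hre n
    have hMhsum : Summable (fun n => M n * (Real.log (pois lb n) - Real.log (M n))) := by
      have : Summable (fun n => ∑ a, p a * (pois (lam a) n * (Real.log (pois lb n) - Real.log (M n)))) :=
        summable_sum fun a (_ : a ∈ Finset.univ) => (hgsum a).mul_left (p a)
      exact this.congr fun n => hre n
    have hle : ∑' n, M n * (Real.log (pois lb n) - Real.log (M n))
        ≤ ∑' n, (pois lb n - M n) := by
      refine Summable.tsum_le_tsum (fun n => ?_) hMhsum ((summable_pois lb).sub hMsummable)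
      have hQM : 0 < pois lb n / M n := div_pos (pois_pos hlbpos n) (hMpos n)
      have hlog := Real.log_le_sub_one_of_pos hQM
      rw [Real.log_div (pois_pos hlbpos n).ne' (hMpos n).ne'] at hlog
      have h4 := mul_le_mul_of_nonneg_left hlog (hMpos n).le
      calc M n * (Real.log (pois lb n) - Real.log (M n))
          ≤ M n * (pois lb n / M n - 1) := h4
        _ = pois lb n - M n := by field_simp [(hMpos n).ne']
    have hz : ∑' n, (pois lb n - M n) = 0 := by
      rw [Summable.tsum_sub (summable_pois lb) hMsummable, tsum_pois, htsumM]; ring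
    rw [hswap]
    rw [hz] at hle
    exact hle
  -- sum of the main terms
  have hF : (∑ a, p a * ((lb - lam a) + (Real.log (lam a) - Real.log lb) * lam a))
      = (∑ a, p a * (lam a * Real.log (lam a))) - lb * Real.log lb := by
    have hexp : ∀ a, p a * ((lb - lam a) + (Real.log (lam a) - Real.log lb) * lam a)
        = lb * p a - p a * lam a + p a * (lam a * Real.log (lam a))
          - Real.log lb * (p a * lam a) := fun a => by ring
    rw [Finset.sum_congr rfl fun a _ => hexp a]
    rw [Finset.sum_sub_distrib, Finset.sum_add_distrib, Finset.sum_sub_distrib,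
      ← Finset.mul_sum, ← Finset.mul_sum, hp1, ← hlbdef]
    ring
  -- Jensen
  have hjensen : (∑ a, p a * Real.log (lam a)) ≤ Real.log lb := by
    have hcc : ConcaveOn ℝ (Set.Ioi 0) Real.log := strictConcaveOn_log_Ioi.concaveOn
    have h5 := hcc.le_map_sum (fun a (_ : a ∈ Finset.univ) => hp a) hp1
      (fun a (_ : a ∈ Finset.univ) => Set.mem_Ioi.2 (hlpos a)) (p := lam)
    have h6 : (∑ a, p a * Real.log (lam a)) ≤ Real.log (∑ a, p a * lam a) := by
      simpa [smul_eq_mul] using h5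
    exact h6
  have hmul : lb * (∑ a, p a * Real.log (lam a)) ≤ lb * Real.log lb :=
    mul_le_mul_of_nonneg_left hjensen hlbpos.le
  have hshow : (∑ a, p a * ∑' n : ℕ,
        pois (lam a) n * Real.log (pois (lam a) n / (∑ b, p b * pois (lam b) n)))
      = ∑ a, p a * ∑' n, pois (lam a) n * Real.log (pois (lam a) n / M n) := rfl
  rw [hshow, hsplit, hF]
  linarith

/-- For a Poisson channel `Y ~ Poisson(X + lam0)` with bounded nonnegative input
`X` (here taking finitely many values `x a` with probabilities `p a`) and
`lam0 > 0`, the mutual information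
`I(X;Y) = E[ D(P_{Y|X} ‖ P_Y) ]` is at most
`Cov(X + lam0, log(X + lam0))`. -/
theorem stmt8 {α : Type} [Fintype α] (p : α → ℝ) (x : α → ℝ) (lam0 : ℝ)
    (hp : ∀ a, 0 ≤ p a) (hp1 : (∑ a, p a) = 1)
    (hx : ∀ a, 0 ≤ x a) (hlam : 0 < lam0) :
    (∑ a, p a * ∑' n : ℕ,
        pois (x a + lam0) n *
          Real.log (pois (x a + lam0) n / (∑ b, p b * pois (x b + lam0) n))) ≤
      (∑ a, p a * ((x a + lam0) * Real.log (x a + lam0))) -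
        (∑ a, p a * (x a + lam0)) * (∑ a, p a * Real.log (x a + lam0)) := by
  exact stmt8_aux p (fun a => x a + lam0) lam0 hp hp1 hlam
    (fun a => le_add_of_nonneg_left (hx a))
end

section
/- For a random variable X with 0 ≤ X ≤ A and E[X] = E_s, the quantity Cov(X + λ₀, log(X + λ₀)) is maximized, over all such distributions, by a two-point distribution supported on {0, A}; the maximum equals (E_s/A)(A − E_s)·log(A/λ₀ + 1) when E_s < A/2, and (A/4)·log(A/λ₀ + 1) when E_s ≥ A/2 (the latter maximum taken without the mean constraint active, i.e., over E[X] ≤ E_s with E_s ≥ A/2). -/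
open MeasureTheory

/-- `Cov(X + λ₀, log(X + λ₀))` for `X` distributed according to `μ`. -/
noncomputable def covTerm (lam0 : ℝ) (μ : Measure ℝ) : ℝ :=
  (∫ x, (x + lam0) * Real.log (x + lam0) ∂μ) -
    (∫ x, (x + lam0) ∂μ) * (∫ x, Real.log (x + lam0) ∂μ)

/-- The claimed maximum of `Cov(X + λ₀, log(X + λ₀))` over distributions on
`[0, A]` with mean at most `E_s`. -/
noncomputable def covMax (A lam0 Es : ℝ) : ℝ :=
  if Es < A / 2 then (Es / A) * (A - Es) * Real.log (A / lam0 + 1)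
  else (A / 4) * Real.log (A / lam0 + 1)

lemma aux_integrable_dirac {f : ℝ → ℝ} (hf : Measurable f) (a : ℝ) :
    Integrable f (Measure.dirac a) := by
  refine ⟨hf.aestronglyMeasurable, ?_⟩
  rw [HasFiniteIntegral, lintegral_dirac]
  exact ENNReal.coe_lt_top

lemma aux_integral_twoPoint (p : ℝ) (hp0 : 0 ≤ p) (hp1 : p ≤ 1) (a b : ℝ) (f : ℝ → ℝ)
    (hf : Measurable f) :
    ∫ x, f x ∂((ENNReal.ofReal (1-p)) • Measure.dirac a + (ENNReal.ofReal p) • Measure.dirac b)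
      = (1-p) * f a + p * f b := by
  rw [integral_add_measure ((aux_integrable_dirac hf a).smul_measure ENNReal.ofReal_lt_top.ne)
    ((aux_integrable_dirac hf b).smul_measure ENNReal.ofReal_lt_top.ne),
    integral_smul_measure, integral_smul_measure, integral_dirac, integral_dirac,
    ENNReal.toReal_ofReal (by linarith), ENNReal.toReal_ofReal hp0]
  simp [smul_eq_mul]

lemma aux_prod_bound {u v m n t : ℝ} (hm : 0 ≤ m) (hn : 0 ≤ n) (ht : 0 ≤ t)
    (h1 : -m ≤ u) (h2 : u ≤ n) (h3 : -(n*t) ≤ v) (h4 : v ≤ m*t) : u*v ≤ m*n*t := by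
  rcases le_total 0 u with hu | hu
  · nlinarith [mul_le_mul_of_nonneg_left h4 hu, mul_nonneg hm ht]
  · nlinarith [mul_le_mul_of_nonpos_left h3 hu, mul_nonneg hn ht]

/-- Over all distributions of `X` supported in `[0,A]` with mean at most `E_s`,
`Cov(X + λ₀, log(X + λ₀))` is at most `covMax`, and the maximum is achieved by
a two-point distribution supported on `{0, A}`. -/
theorem stmt9 (A lam0 Es : ℝ) (hA : 0 < A) (hl : 0 < lam0)
    (hE0 : 0 ≤ Es) (hEA : Es ≤ A) :
    (∀ μ : Measure ℝ, IsProbabilityMeasure μ → μ (Set.Icc 0 A)ᶜ = 0 →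
        (∫ x, x ∂μ) ≤ Es → covTerm lam0 μ ≤ covMax A lam0 Es) ∧
    (∃ μ : Measure ℝ, IsProbabilityMeasure μ ∧ μ ({0, A} : Set ℝ)ᶜ = 0 ∧
        (∫ x, x ∂μ) ≤ Es ∧ covTerm lam0 μ = covMax A lam0 Es) := by
  have hgmeas : Measurable (fun x : ℝ => Real.log (x + lam0)) :=
    Real.measurable_log.comp (measurable_id.add_const lam0)
  set g0 : ℝ := Real.log lam0 with hg0
  set gA : ℝ := Real.log (A + lam0) with hgA
  have hLlog : Real.log (A / lam0 + 1) = gA - g0 := by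
    rw [show A / lam0 + 1 = (A + lam0) / lam0 by field_simp, Real.log_div (by positivity) hl.ne']
  have hL0 : 0 ≤ gA - g0 := by
    have := Real.log_le_log hl (by linarith : lam0 ≤ A + lam0)
    linarith
  constructor
  · -- upper bound
    intro μ hprob hsupp hmean
    have hae : ∀ᵐ x ∂μ, x ∈ Set.Icc (0:ℝ) A := by
      rw [ae_iff]
      simpa [Set.compl_def] using hsupp
    have hgbd : ∀ x ∈ Set.Icc (0:ℝ) A, g0 ≤ Real.log (x + lam0) ∧ Real.log (x + lam0) ≤ gA := by
      intro x hx
      exact ⟨Real.log_le_log hl (by linarith [hx.1]),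
        Real.log_le_log (by linarith [hx.1]) (by linarith [hx.2])⟩
    set Cg : ℝ := |g0| + |gA| with hCg
    have hCg0 : 0 ≤ Cg := by positivity
    have hgC : ∀ x ∈ Set.Icc (0:ℝ) A, ‖Real.log (x + lam0)‖ ≤ Cg := by
      intro x hx
      obtain ⟨h1, h2⟩ := hgbd x hx
      rw [Real.norm_eq_abs, abs_le]
      constructor
      · linarith [neg_abs_le g0, abs_nonneg gA]
      · linarith [le_abs_self gA, abs_nonneg g0]
    have hint_g : Integrable (fun x => Real.log (x + lam0)) μ :=
      (integrable_const Cg).mono' hgmeas.aestronglyMeasurable (hae.mono fun x hx => hgC x hx)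
    have hint_x : Integrable (fun x : ℝ => x) μ := by
      refine (integrable_const A).mono' measurable_id.aestronglyMeasurable
        (hae.mono fun x hx => ?_)
      rw [Real.norm_eq_abs, abs_le]
      exact ⟨by linarith [hx.1], hx.2⟩
    have hint_xg : Integrable (fun x => x * Real.log (x + lam0)) μ := by
      refine (integrable_const (A * Cg)).mono' (measurable_id.mul hgmeas).aestronglyMeasurable
        (hae.mono fun x hx => ?_)
      rw [Real.norm_eq_abs, abs_mul]
      have h1 : |x| ≤ A := abs_le.mpr ⟨by linarith [hx.1], hx.2⟩
      have h2 := hgC x hx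
      rw [Real.norm_eq_abs] at h2
      exact mul_le_mul h1 h2 (abs_nonneg _) (le_trans (abs_nonneg x) h1)
    set m : ℝ := ∫ x, x ∂μ with hm
    have hm0 : 0 ≤ m := integral_nonneg_of_ae (hae.mono fun x hx => hx.1)
    have hmA : m ≤ A := by
      have h := integral_mono_ae hint_x (integrable_const A) (hae.mono fun x hx => hx.2)
      simpa [measure_univ] using h
    set c : ℝ := ((A - m) * gA + m * g0) / A with hc
    set t : ℝ := (gA - g0) / A with ht
    have ht0 : 0 ≤ t := by positivity
    have hc3 : g0 - c = -((A - m) * t) := by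
      rw [hc, ht]; field_simp; ring
    have hc4 : gA - c = m * t := by
      rw [hc, ht]; field_simp; ring
    have hint_h : Integrable (fun x => (x - m) * (Real.log (x + lam0) - c)) μ := by
      have heq : (fun x => (x - m) * (Real.log (x + lam0) - c))
          = fun x => x * Real.log (x + lam0) - m * Real.log (x + lam0) - c * x + m * c :=
        funext fun x => by ring
      rw [heq]
      exact ((hint_xg.sub (hint_g.const_mul m)).sub (hint_x.const_mul c)).add
        (integrable_const (m * c))
    have ecov : covTerm lam0 μ = ∫ x, (x - m) * (Real.log (x + lam0) - c) ∂μ := by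
      have e1 : (∫ x, (x + lam0) * Real.log (x + lam0) ∂μ)
          = (∫ x, x * Real.log (x + lam0) ∂μ) + lam0 * ∫ x, Real.log (x + lam0) ∂μ := by
        rw [← integral_const_mul, ← integral_add hint_xg (hint_g.const_mul lam0)]
        congr 1; funext x; ring
      have e2 : (∫ x, (x + lam0) ∂μ) = m + lam0 := by
        rw [integral_add hint_x (integrable_const lam0), integral_const]
        simp [measure_univ, hm]
      have e3 : ∫ x, (x - m) * (Real.log (x + lam0) - c) ∂μ
          = (∫ x, x * Real.log (x + lam0) ∂μ) - m * (∫ x, Real.log (x + lam0) ∂μ) := by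
        have heq : (fun x => (x - m) * (Real.log (x + lam0) - c))
            = fun x => x * Real.log (x + lam0) - m * Real.log (x + lam0) - c * x + m * c :=
          funext fun x => by ring
        have hGm : Integrable (fun x => m * Real.log (x + lam0)) μ := hint_g.const_mul m
        have hcx : Integrable (fun x : ℝ => c * x) μ := hint_x.const_mul c
        have h1 : Integrable
            (fun x => x * Real.log (x + lam0) - m * Real.log (x + lam0)) μ := hint_xg.sub hGm
        have h2 : Integrable
            (fun x => x * Real.log (x + lam0) - m * Real.log (x + lam0) - c * x) μ := h1.sub hcx
        rw [heq, integral_add h2 (integrable_const (m * c)),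
          integral_sub h1 hcx, integral_sub hint_xg hGm,
          integral_const_mul, integral_const_mul, integral_const]
        simp [measure_univ, ← hm]
        ring
      rw [covTerm, e1, e2, e3]
      ring
    have hbd : covTerm lam0 μ ≤ m * (A - m) * t := by
      rw [ecov]
      calc ∫ x, (x - m) * (Real.log (x + lam0) - c) ∂μ
          ≤ ∫ _, m * (A - m) * t ∂μ := by
            refine integral_mono_ae hint_h (integrable_const _) (hae.mono fun x hx => ?_)
            obtain ⟨hb1, hb2⟩ := hgbd x hx
            exact aux_prod_bound hm0 (by linarith) ht0 (by linarith [hx.1]) (by linarith [hx.2])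
              (by linarith [hc3 ▸ (by linarith : g0 - c ≤ Real.log (x + lam0) - c)])
              (by linarith [hc4 ▸ (by linarith : Real.log (x + lam0) - c ≤ gA - c)])
        _ = m * (A - m) * t := by simp [measure_univ]
    rw [covMax]
    split_ifs with hcase
    · have hmE : m ≤ Es := hmean
      have key : m * (A - m) ≤ Es * (A - Es) := by nlinarith
      have : m * (A - m) * t ≤ Es / A * (A - Es) * Real.log (A / lam0 + 1) := by
        rw [hLlog, ht]
        calc m * (A - m) * ((gA - g0) / A) = m * (A - m) * (gA - g0) / A := by ring
          _ ≤ Es * (A - Es) * (gA - g0) / A := by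
              exact (div_le_div_iff_of_pos_right hA).mpr (mul_le_mul_of_nonneg_right key hL0)
          _ = Es / A * (A - Es) * (gA - g0) := by ring
      linarith
    · have key : m * (A - m) ≤ A ^ 2 / 4 := by nlinarith [sq_nonneg (m - A / 2)]
      have : m * (A - m) * t ≤ A / 4 * Real.log (A / lam0 + 1) := by
        rw [hLlog, ht]
        calc m * (A - m) * ((gA - g0) / A) = m * (A - m) * (gA - g0) / A := by ring
          _ ≤ A ^ 2 / 4 * (gA - g0) / A := by
              exact (div_le_div_iff_of_pos_right hA).mpr (mul_le_mul_of_nonneg_right key hL0)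
          _ = A / 4 * (gA - g0) := by field_simp
      linarith
  · -- achievability
    set p : ℝ := if Es < A / 2 then Es / A else 1 / 2 with hp
    have hp0 : 0 ≤ p := by
      rw [hp]; split_ifs
      · positivity
      · norm_num
    have hp1 : p ≤ 1 := by
      rw [hp]; split_ifs
      · exact div_le_one_of_le₀ hEA hA.le
      · norm_num
    set μ : Measure ℝ := (ENNReal.ofReal (1 - p)) • Measure.dirac 0
      + (ENNReal.ofReal p) • Measure.dirac A with hμ
    have hint : ∀ f : ℝ → ℝ, Measurable f → ∫ x, f x ∂μ = (1 - p) * f 0 + p * f A :=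
      fun f hf => aux_integral_twoPoint p hp0 hp1 0 A f hf
    have hmean : ∫ x, x ∂μ = p * A := by
      rw [hint (fun x => x) measurable_id]; ring
    refine ⟨μ, ?_, ?_, ?_, ?_⟩
    · constructor
      rw [hμ]
      simp only [Measure.add_apply, Measure.smul_apply, smul_eq_mul, measure_univ, mul_one]
      rw [← ENNReal.ofReal_add (by linarith : (0:ℝ) ≤ 1 - p) hp0]
      norm_num
    · have hms : MeasurableSet (({0, A} : Set ℝ))ᶜ :=
        (MeasurableSet.insert (measurableSet_singleton A) 0).compl
      rw [hμ]
      simp only [Measure.add_apply, Measure.smul_apply, smul_eq_mul,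
        Measure.dirac_apply' _ hms]
      rw [Set.indicator_of_notMem (by simp) , Set.indicator_of_notMem (by simp)]
      simp
    · rw [hmean, hp]
      split_ifs with hcase
      · rw [div_mul_eq_mul_div, mul_div_assoc, div_self hA.ne', mul_one]
      · push_neg at hcase; linarith
    · have e1 : ∫ x, (x + lam0) * Real.log (x + lam0) ∂μ
          = (1 - p) * (lam0 * g0) + p * ((A + lam0) * gA) := by
        have hf1 : Measurable (fun x : ℝ => (x + lam0) * Real.log (x + lam0)) :=
          (measurable_id.add_const lam0).mul hgmeas
        rw [hint _ hf1]
        simp [hg0, hgA]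
      have e2 : ∫ x, (x + lam0) ∂μ = (1 - p) * lam0 + p * (A + lam0) := by
        have hf2 : Measurable (fun x : ℝ => x + lam0) := measurable_id.add_const lam0
        rw [hint _ hf2]
        simp
      have e3 : ∫ x, Real.log (x + lam0) ∂μ = (1 - p) * g0 + p * gA := by
        rw [hint _ hgmeas]
        simp [hg0, hgA]
      rw [covTerm, e1, e2, e3, covMax, hLlog]
      split_ifs with hcase
      · have hpv : p = Es / A := by rw [hp, if_pos hcase]
        rw [hpv]
        field_simp
        ring
      · have hpv : p = 1 / 2 := by rw [hp, if_neg hcase]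
        rw [hpv]
        ring
end

section
/- In the delay-selector channel with maximum delay Δ and at most N molecules per slot, if two input sequences x = (x₁,…,x_n) and x' = (x'₁,…,x'_n) satisfy x_i = x'_i for all i > Δ+1 and Σ_{i=1}^{Δ+1} x_i = Σ_{i=1}^{Δ+1} x'_i, then there exists an output sequence y reachable from both x and x'; in particular, x and x' cannot both belong to a zero-error code. -/
/-- Reachability relation of the delay-selector channel with maximum delay `Δ`
(0-indexed slots): `y` is obtainable from `x` if there is an assignment
`A i j` = number of molecules sent in slot `i` arriving in slot `j`, where each
molecule sent in slot `i` arrives in some slot `j` with `i ≤ j ≤ i + Δ`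
(all arrivals occur within slots `0, …, n-1`). -/
def reaches (Δ n : ℕ) (x y : Fin n → ℕ) : Prop :=
  ∃ A : Fin n → Fin n → ℕ,
    (∀ i, (∑ j, A i j) = x i) ∧
    (∀ i j : Fin n, A i j ≠ 0 → (i : ℕ) ≤ (j : ℕ) ∧ (j : ℕ) ≤ (i : ℕ) + Δ) ∧
    (∀ j, y j = ∑ i, A i j)

lemma key_reach (Δ n : ℕ) (hn : Δ < n) (x : Fin n → ℕ) :
    reaches Δ n x (fun j =>
      if (j : ℕ) = Δ then (∑ i ∈ Finset.univ.filter (fun i : Fin n => (i : ℕ) ≤ Δ), x i)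
      else if Δ < (j : ℕ) then x j else 0) := by
  refine ⟨fun i j => if (i : ℕ) ≤ Δ then (if j = ⟨Δ, hn⟩ then x i else 0)
    else (if j = i then x i else 0), ?_, ?_, ?_⟩
  · intro i
    by_cases h : (i : ℕ) ≤ Δ <;> simp [h]
  · intro i j hA
    by_cases h : (i : ℕ) ≤ Δ
    · simp only [h, if_true] at hA
      have hj : j = ⟨Δ, hn⟩ := by by_contra hc; simp [hc] at hA
      subst hj
      exact ⟨h, Nat.le_add_left _ _⟩
    · have hj : j = i := by by_contra hc; simp [h, hc] at hA
      subst hj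
      exact ⟨le_refl _, Nat.le_add_right _ _⟩
  · intro j
    rw [Finset.sum_ite]
    by_cases hj : (j : ℕ) = Δ
    · have hjD : j = ⟨Δ, hn⟩ := Fin.ext hj
      subst hjD
      simp only [if_true, hj, lt_irrefl]
      have h2 : (∑ i ∈ Finset.univ.filter (fun i : Fin n => ¬ (i : ℕ) ≤ Δ),
          (if (⟨Δ, hn⟩ : Fin n) = i then x i else 0)) = 0 := by
        apply Finset.sum_eq_zero
        intro i hi
        simp only [Finset.mem_filter, not_le] at hi
        have : (⟨Δ, hn⟩ : Fin n) ≠ i := by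
          intro h; apply absurd hi.2; simp [← h]
        simp [this]
      simp [h2]
    · have hne : ∀ i ∈ Finset.univ.filter (fun i : Fin n => (i : ℕ) ≤ Δ),
          (if j = ⟨Δ, hn⟩ then x i else 0) = 0 := by
        intro i hi
        have : j ≠ ⟨Δ, hn⟩ := by intro h; exact hj (by simp [h])
        simp [this]
      rw [Finset.sum_congr rfl hne]
      simp only [Finset.sum_const_zero, zero_add, hj, if_false]
      by_cases hjΔ : Δ < (j : ℕ)
      · have hjm : j ∈ Finset.univ.filter (fun i : Fin n => ¬ (i : ℕ) ≤ Δ) := by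
          simp [not_le, hjΔ]
        rw [Finset.sum_eq_single_of_mem j hjm]
        · simp [hjΔ]
        · intro i _ hij
          simp [(Ne.symm hij : j ≠ i)]
      · simp only [hjΔ, if_false]
        symm
        apply Finset.sum_eq_zero
        intro i hi
        simp only [Finset.mem_filter, not_le] at hi
        have : j ≠ i := by
          intro h; subst h; exact hjΔ hi.2
        simp [this]

/-- In the delay-selector channel with maximum delay `Δ` and at most `N`
molecules per slot, if `x` and `x'` agree beyond the first `Δ+1` slots and
have equal total counts over the first `Δ+1` slots, then some output `y` is
reachable from both; in particular `x, x'` cannot both lie in a zero-error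
code. -/
theorem stmt14 (Δ N n : ℕ) (hn : Δ < n) (x x' : Fin n → ℕ)
    (hxN : ∀ i, x i ≤ N) (hx'N : ∀ i, x' i ≤ N)
    (htail : ∀ i : Fin n, Δ + 1 ≤ (i : ℕ) → x i = x' i)
    (hsum : (∑ i ∈ Finset.univ.filter (fun i : Fin n => (i : ℕ) ≤ Δ), x i) =
            (∑ i ∈ Finset.univ.filter (fun i : Fin n => (i : ℕ) ≤ Δ), x' i)) :
    (∃ y : Fin n → ℕ, reaches Δ n x y ∧ reaches Δ n x' y) ∧
    (∀ code : Set (Fin n → ℕ),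
      (∀ u ∈ code, ∀ v ∈ code, u ≠ v →
        ¬∃ y, reaches Δ n u y ∧ reaches Δ n v y) →
      x ∈ code → x' ∈ code → x = x') := by
  have hyeq : (fun j : Fin n =>
      if (j : ℕ) = Δ then (∑ i ∈ Finset.univ.filter (fun i : Fin n => (i : ℕ) ≤ Δ), x i)
      else if Δ < (j : ℕ) then x j else 0) =
      (fun j : Fin n =>
      if (j : ℕ) = Δ then (∑ i ∈ Finset.univ.filter (fun i : Fin n => (i : ℕ) ≤ Δ), x' i)
      else if Δ < (j : ℕ) then x' j else 0) := by
    funext j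
    by_cases hj : (j : ℕ) = Δ
    · simp [hj, hsum]
    · by_cases hjΔ : Δ < (j : ℕ)
      · simp [hj, hjΔ, htail j hjΔ]
      · simp [hj, hjΔ]
  have hex : ∃ y : Fin n → ℕ, reaches Δ n x y ∧ reaches Δ n x' y := by
    refine ⟨_, key_reach Δ n hn x, ?_⟩
    rw [hyeq]
    exact key_reach Δ n hn x'
  refine ⟨hex, ?_⟩
  intro code hc hx hx'
  by_contra hne
  exact hc x hx x' hx' hne hex
end
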